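/- arXiv:1905.04011 — 5 statements merged into one kernel-verified Lean document; each statement's English description precedes it below -/
import Mathlib

section
/- Let k = (k1,k2) ∈ ℝ² satisfy μ(k) = 0. Then |t1 + i·t2·exp(i k1)| = |i + t3·exp(i k1)|. Moreover, if i + t3·exp(i k1) ≠ 0, then exp(i k2) = (t1 + i·t2·exp(i k1)) / (i + t3·exp(i k1)); i.e., the zeros of μ lie at the intersection of the two circles in the complex plane traced by θ ↦ t1 + i·t2·exp(iθ) and θ ↦ i + t3·exp(iθ). -/
open Complex Real

/-- The characteristic polynomial of the non-interacting dimer model. -/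
noncomputable def mu (t1 t2 t3 : ℝ) (k : ℝ × ℝ) : ℂ :=
  (t1 : ℂ) + Complex.I * (t2 : ℂ) * Complex.exp (Complex.I * (k.1 : ℂ))
    - (t3 : ℂ) * Complex.exp (Complex.I * ((k.1 : ℂ) + (k.2 : ℂ)))
    - Complex.I * Complex.exp (Complex.I * (k.2 : ℂ))

/-- The zeros of `μ` lie on the intersection of the two circles
`θ ↦ t₁ + i t₂ e^{iθ}` and `θ ↦ i + t₃ e^{iθ}`. -/
theorem zeros_of_mu_on_circles (t1 t2 t3 : ℝ) (ht1 : 0 < t1) (ht2 : 0 < t2) (ht3 : 0 < t3)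
    (k : ℝ × ℝ) (hk : mu t1 t2 t3 k = 0) :
    ‖(t1 : ℂ) + Complex.I * (t2 : ℂ) * Complex.exp (Complex.I * (k.1 : ℂ))‖
      = ‖Complex.I + (t3 : ℂ) * Complex.exp (Complex.I * (k.1 : ℂ))‖ ∧
    (Complex.I + (t3 : ℂ) * Complex.exp (Complex.I * (k.1 : ℂ)) ≠ 0 →
      Complex.exp (Complex.I * (k.2 : ℂ))
        = ((t1 : ℂ) + Complex.I * (t2 : ℂ) * Complex.exp (Complex.I * (k.1 : ℂ)))
          / (Complex.I + (t3 : ℂ) * Complex.exp (Complex.I * (k.1 : ℂ)))) := by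
  set A := (t1 : ℂ) + Complex.I * (t2 : ℂ) * Complex.exp (Complex.I * (k.1 : ℂ)) with hA
  set B := Complex.I + (t3 : ℂ) * Complex.exp (Complex.I * (k.1 : ℂ)) with hB
  have key : A = B * Complex.exp (Complex.I * (k.2 : ℂ)) := by
    have h := hk
    unfold mu at h
    rw [mul_add, Complex.exp_add] at h
    rw [hA, hB]
    ring_nf
    ring_nf at h
    linear_combination h
  constructor
  · rw [key, norm_mul, Complex.norm_exp]
    simp [Complex.mul_re]
  · intro hBne
    rw [eq_div_iff hBne, key]; ring
end

section
/- Let t > 0 and take t1 = t3 = t, t2 = 1. Then for k = (k1,k2) ∈ ℝ², μ(k) = 0 if and only if k ∈ (0,0) + 2πℤ² or k ∈ (π,π) + 2πℤ². Moreover the partial derivatives at the zero p⁺ = (0,0) are ∂_{k1}μ(0,0) = −(1 + i t) and ∂_{k2}μ(0,0) = 1 − i t, and consequently Im(∂_{k1}μ(0,0) · ∂_{k2}μ(π,π)) = 2t ≠ 0, so both zeros are non-degenerate (the gradients at each zero are not real multiples of each other). -/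
open Complex Real

lemma exp_I_eq_one_iff' (x : ℝ) : Complex.exp (Complex.I * x) = 1 ↔ ∃ n : ℤ, x = 2 * π * n := by
  rw [Complex.exp_eq_one_iff]
  constructor
  · rintro ⟨n, hn⟩
    refine ⟨n, ?_⟩
    have h2 : (x : ℂ) = 2 * π * n :=
      mul_left_cancel₀ Complex.I_ne_zero (by rw [hn]; ring)
    exact_mod_cast h2
  · rintro ⟨n, hn⟩
    exact ⟨n, by rw [hn]; push_cast; ring⟩

lemma exp_I_eq_neg_one_iff' (x : ℝ) :
    Complex.exp (Complex.I * x) = -1 ↔ ∃ n : ℤ, x = π + 2 * π * n := by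
  have h : Complex.exp (Complex.I * ((x - π : ℝ) : ℂ)) = - Complex.exp (Complex.I * x) := by
    push_cast
    rw [mul_sub, Complex.exp_sub,
      show Complex.I * (π : ℂ) = (π : ℂ) * Complex.I by ring, Complex.exp_pi_mul_I]
    field_simp
  constructor
  · intro hx
    obtain ⟨n, hn⟩ := (exp_I_eq_one_iff' (x - π)).mp (by rw [h, hx]; ring)
    exact ⟨n, by linarith⟩
  · rintro ⟨n, hn⟩
    have h1 : Complex.exp (Complex.I * ((x - π : ℝ) : ℂ)) = 1 :=
      (exp_I_eq_one_iff' _).mpr ⟨n, by linarith⟩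
    rw [h] at h1
    linear_combination -h1

lemma hasDerivAt_cexp_I (z : ℂ) :
    HasDerivAt (fun z : ℂ => Complex.exp (Complex.I * z)) (Complex.I * Complex.exp (Complex.I * z)) z := by
  simpa [Function.comp_def, mul_comm] using
    ((Complex.hasDerivAt_exp (Complex.I * z)).comp z ((hasDerivAt_id z).const_mul Complex.I))

lemma hasDerivAt_rexp_I (x : ℝ) :
    HasDerivAt (fun x : ℝ => Complex.exp (Complex.I * (x : ℂ)))
      (Complex.I * Complex.exp (Complex.I * (x : ℂ))) x :=
  (hasDerivAt_cexp_I (x : ℂ)).comp_ofReal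

lemma norm_one_exp (x : ℝ) :
    Complex.exp (Complex.I * x) * (starRingEnd ℂ) (Complex.exp (Complex.I * x)) = 1 := by
  rw [← Complex.exp_conj, ← Complex.exp_add]
  simp

/-- For `t₁ = t₃ = t`, `t₂ = 1`: the zeros of `μ` are exactly `(0,0)` and `(π,π)` mod `2π`,
the gradients at the zeros are as computed, `Im(α₊ β₋) = 2t ≠ 0`, and at each zero the two
components of the gradient are not real multiples of each other (non-degeneracy). -/
theorem mu_zeros_special_case (t : ℝ) (ht : 0 < t) :
    (∀ k : ℝ × ℝ, mu t 1 t k = 0 ↔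
      ((∃ m n : ℤ, k = (2 * π * m, 2 * π * n)) ∨
       (∃ m n : ℤ, k = (π + 2 * π * m, π + 2 * π * n)))) ∧
    deriv (fun x : ℝ => mu t 1 t (x, 0)) 0 = -(1 + Complex.I * t) ∧
    deriv (fun y : ℝ => mu t 1 t (0, y)) 0 = 1 - Complex.I * t ∧
    (deriv (fun x : ℝ => mu t 1 t (x, 0)) 0
      * deriv (fun y : ℝ => mu t 1 t (π, y)) π).im = 2 * t ∧
    2 * t ≠ 0 ∧
    (∀ c : ℝ, deriv (fun y : ℝ => mu t 1 t (0, y)) 0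
        ≠ (c : ℂ) * deriv (fun x : ℝ => mu t 1 t (x, 0)) 0) ∧
    (∀ c : ℝ, deriv (fun y : ℝ => mu t 1 t (π, y)) π
        ≠ (c : ℂ) * deriv (fun x : ℝ => mu t 1 t (x, π)) π) := by
  have htC : (t : ℂ) ≠ 0 := Complex.ofReal_ne_zero.mpr ht.ne'
  -- the four derivatives
  have hd1 : deriv (fun x : ℝ => mu t 1 t (x, 0)) 0 = -(1 + Complex.I * t) := by
    have hfun : (fun x : ℝ => mu t 1 t (x, 0)) =
        fun x : ℝ => ((t : ℂ) - Complex.I)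
          + (Complex.I - t) * Complex.exp (Complex.I * (x : ℂ)) := by
      funext x; simp [mu]; ring
    rw [hfun]
    have := (((hasDerivAt_rexp_I 0).const_mul (Complex.I - t)).const_add ((t : ℂ) - Complex.I)).deriv
    rw [this]; simp; linear_combination Complex.I_sq
  have hd2 : deriv (fun y : ℝ => mu t 1 t (0, y)) 0 = 1 - Complex.I * t := by
    have hfun : (fun y : ℝ => mu t 1 t (0, y)) =
        fun y : ℝ => ((t : ℂ) + Complex.I)
          + (-(t : ℂ) - Complex.I) * Complex.exp (Complex.I * (y : ℂ)) := by
      funext y; simp [mu]; ring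
    rw [hfun]
    have := (((hasDerivAt_rexp_I 0).const_mul (-(t : ℂ) - Complex.I)).const_add ((t : ℂ) + Complex.I)).deriv
    rw [this]; simp; linear_combination -Complex.I_sq
  have hd3 : deriv (fun y : ℝ => mu t 1 t (π, y)) π = -(1 + Complex.I * t) := by
    have hfun : (fun y : ℝ => mu t 1 t (π, y)) =
        fun y : ℝ => ((t : ℂ) - Complex.I)
          + ((t : ℂ) - Complex.I) * Complex.exp (Complex.I * (y : ℂ)) := by
      funext y
      simp only [mu]
      rw [mul_add, Complex.exp_add,
        show Complex.I * (π : ℂ) = (π : ℂ) * Complex.I by ring, Complex.exp_pi_mul_I]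
      push_cast; ring
    rw [hfun]
    have := (((hasDerivAt_rexp_I π).const_mul ((t : ℂ) - Complex.I)).const_add ((t : ℂ) - Complex.I)).deriv
    rw [this,
      show Complex.I * (π : ℂ) = (π : ℂ) * Complex.I by ring, Complex.exp_pi_mul_I]
    linear_combination Complex.I_sq
  have hd4 : deriv (fun x : ℝ => mu t 1 t (x, π)) π = 1 - Complex.I * t := by
    have hfun : (fun x : ℝ => mu t 1 t (x, π)) =
        fun x : ℝ => ((t : ℂ) + Complex.I)
          + ((t : ℂ) + Complex.I) * Complex.exp (Complex.I * (x : ℂ)) := by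
      funext x
      simp only [mu]
      rw [mul_add, Complex.exp_add,
        show Complex.I * ((π : ℝ) : ℂ) = (π : ℂ) * Complex.I by ring, Complex.exp_pi_mul_I]
      push_cast; ring
    rw [hfun]
    have := (((hasDerivAt_rexp_I π).const_mul ((t : ℂ) + Complex.I)).const_add ((t : ℂ) + Complex.I)).deriv
    rw [this,
      show Complex.I * (π : ℂ) = (π : ℂ) * Complex.I by ring, Complex.exp_pi_mul_I]
    linear_combination -Complex.I_sq
  refine ⟨?_, hd1, hd2, ?_, ?_, ?_, ?_⟩
  · -- zero set characterization
    rintro ⟨k1, k2⟩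
    set a := Complex.exp (Complex.I * (k1 : ℂ)) with ha_def
    set b := Complex.exp (Complex.I * (k2 : ℂ)) with hb_def
    have hab : Complex.exp (Complex.I * ((k1 : ℂ) + (k2 : ℂ))) = a * b := by
      rw [mul_add, Complex.exp_add]
    have hmu : mu t 1 t (k1, k2) = (t : ℂ) + Complex.I * a - t * (a * b) - Complex.I * b := by
      simp [mu, hab]; rfl
    constructor
    · intro h0
      rw [hmu] at h0
      have na : a * (starRingEnd ℂ) a = 1 := norm_one_exp k1
      have nb : b * (starRingEnd ℂ) b = 1 := norm_one_exp k2
      set ca := (starRingEnd ℂ) a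
      set cb := (starRingEnd ℂ) b
      have hc : (t : ℂ) - Complex.I * ca - t * (ca * cb) + Complex.I * cb = 0 := by
        have := congrArg (starRingEnd ℂ) h0
        simp [map_add, map_sub, map_mul, Complex.conj_I, Complex.conj_ofReal] at this
        rw [← sub_eq_add_neg] at this
        exact this
      have hab1 : a * b = 1 := by
        have key : (2 * (t : ℂ)) * (a * b - 1) = 0 := by
          linear_combination -h0 + (a * b) * hc + (Complex.I * b + (t : ℂ) * b * cb) * na
            + ((t : ℂ) - Complex.I * a) * nb
        have h2t : (2 * (t : ℂ)) ≠ 0 := by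
          simpa using htC
        have := mul_eq_zero.mp key
        rcases this with h | h
        · exact absurd h h2t
        · exact sub_eq_zero.mp h
      have haeb : a = b := by
        linear_combination (-Complex.I) * h0 + (-Complex.I * (t : ℂ)) * hab1
          + (a - b) * Complex.I_sq
      have ha2 : (a - 1) * (a + 1) = 0 := by
        linear_combination hab1 + a * haeb
      rcases mul_eq_zero.mp ha2 with h1 | h1
      · left
        have haa : a = 1 := sub_eq_zero.mp h1
        obtain ⟨m, hm⟩ := (exp_I_eq_one_iff' k1).mp haa
        obtain ⟨n, hn⟩ := (exp_I_eq_one_iff' k2).mp (haeb.symm.trans haa)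
        exact ⟨m, n, by rw [hm, hn]⟩
      · right
        have haa : a = -1 := eq_neg_of_add_eq_zero_left h1
        obtain ⟨m, hm⟩ := (exp_I_eq_neg_one_iff' k1).mp haa
        obtain ⟨n, hn⟩ := (exp_I_eq_neg_one_iff' k2).mp (haeb.symm.trans haa)
        exact ⟨m, n, by rw [hm, hn]⟩
    · rintro (⟨m, n, hk⟩ | ⟨m, n, hk⟩)
      · have h1 : k1 = 2 * π * m := congrArg Prod.fst hk
        have h2 : k2 = 2 * π * n := congrArg Prod.snd hk
        have ha1 : a = 1 := (exp_I_eq_one_iff' k1).mpr ⟨m, h1⟩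
        have hb1 : b = 1 := (exp_I_eq_one_iff' k2).mpr ⟨n, h2⟩
        rw [hmu, ha1, hb1]; ring
      · have h1 : k1 = π + 2 * π * m := congrArg Prod.fst hk
        have h2 : k2 = π + 2 * π * n := congrArg Prod.snd hk
        have ha1 : a = -1 := (exp_I_eq_neg_one_iff' k1).mpr ⟨m, h1⟩
        have hb1 : b = -1 := (exp_I_eq_neg_one_iff' k2).mpr ⟨n, h2⟩
        rw [hmu, ha1, hb1]; ring
  · rw [hd1, hd3]
    simp [Complex.mul_im]
    ring
  · positivity
  · intro c hc
    rw [hd1, hd2] at hc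
    have hre := congrArg Complex.re hc
    have him := congrArg Complex.im hc
    simp at hre him
    nlinarith
  · intro c hc
    rw [hd3, hd4] at hc
    have hre := congrArg Complex.re hc
    have him := congrArg Complex.im hc
    simp at hre him
    nlinarith
end

section
/- Assume that k ↦ 1/μ(k) is Lebesgue integrable on [−π,π]². Then the Fourier coefficients g_a := (2π)^{−2} ∫_{[−π,π]²} exp(i(k1·a1 + k2·a2)) / μ(k) dk satisfy: g_{(0,0)} and g_{(1,1)} are real numbers, while g_{(1,0)} and g_{(0,1)} are purely imaginary numbers. -/
open Complex Real MeasureTheory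

/-- The Fourier coefficient `g_a = (2π)⁻² ∫_{[−π,π]²} e^{i k·a}/μ(k) dk`. -/
noncomputable def gcoef (t1 t2 t3 : ℝ) (a : ℤ × ℤ) : ℂ :=
  (((2 * π) ^ 2 : ℝ) : ℂ)⁻¹ *
    ∫ k in Set.Icc (-π) π ×ˢ Set.Icc (-π) π,
      Complex.exp (Complex.I * ((k.1 : ℂ) * (a.1 : ℂ) + (k.2 : ℂ) * (a.2 : ℂ)))
        / mu t1 t2 t3 k

lemma exp_I_pi_sub (r : ℂ) : Complex.exp (Complex.I * ((π : ℂ) - r)) = -Complex.exp (-(Complex.I * r)) := by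
  rw [mul_sub, Complex.exp_sub,
    show Complex.I * (π:ℂ) = (π:ℂ) * Complex.I by ring, Complex.exp_pi_mul_I, Complex.exp_neg]
  field_simp

lemma exp_eq_of_int (A B : ℂ) (n : ℤ) (h : A = (n:ℂ) * (2*(π:ℂ)*Complex.I) + B) :
    Complex.exp A = Complex.exp B := by
  rw [h, Complex.exp_add, Complex.exp_int_mul_two_pi_mul_I, one_mul]

lemma mu_conj (t1 t2 t3 x y : ℝ) :
    (starRingEnd ℂ) (mu t1 t2 t3 (x, y)) = mu t1 t2 t3 (π - x, π - y) := by
  simp only [mu, map_add, map_sub, map_mul, Complex.conj_I, Complex.conj_ofReal,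
    ← Complex.exp_conj]
  push_cast
  rw [exp_I_pi_sub, exp_I_pi_sub,
    show ((π:ℂ) - x + ((π:ℂ) - y)) = (π:ℂ) - ((x:ℂ) + (y:ℂ) - (π:ℂ)) by ring,
    exp_I_pi_sub,
    show -(Complex.I * ((x:ℂ) + (y:ℂ) - (π:ℂ))) = -(Complex.I*((x:ℂ)+(y:ℂ))) + (π:ℂ)*Complex.I by ring,
    Complex.exp_add, Complex.exp_pi_mul_I]
  ring_nf

lemma mu_per1 (t1 t2 t3 x y : ℝ) : mu t1 t2 t3 (x + 2*π, y) = mu t1 t2 t3 (x, y) := by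
  simp only [mu]
  push_cast
  rw [show Complex.I * ((x:ℂ) + 2*π) = 2*(π:ℂ)*Complex.I + Complex.I*(x:ℂ) by ring,
    show Complex.I * ((x:ℂ) + 2*π + (y:ℂ)) = 2*(π:ℂ)*Complex.I + Complex.I*((x:ℂ)+(y:ℂ)) by ring,
    Complex.exp_add, Complex.exp_add, Complex.exp_two_pi_mul_I, one_mul, one_mul]

lemma mu_per2 (t1 t2 t3 x y : ℝ) : mu t1 t2 t3 (x, y + 2*π) = mu t1 t2 t3 (x, y) := by
  simp only [mu]
  push_cast
  rw [show Complex.I * ((y:ℂ) + 2*π) = 2*(π:ℂ)*Complex.I + Complex.I*(y:ℂ) by ring,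
    show Complex.I * ((x:ℂ) + ((y:ℂ) + 2*π)) = 2*(π:ℂ)*Complex.I + Complex.I*((x:ℂ)+(y:ℂ)) by ring,
    Complex.exp_add, Complex.exp_add, Complex.exp_two_pi_mul_I, one_mul, one_mul]

/-- The integrand of `gcoef`, in two-variable form. -/
noncomputable def Fint (t1 t2 t3 : ℝ) (a : ℤ × ℤ) (x y : ℝ) : ℂ :=
  Complex.exp (Complex.I * ((x : ℂ) * (a.1 : ℂ) + (y : ℂ) * (a.2 : ℂ))) / mu t1 t2 t3 (x, y)

lemma Fint_conj (t1 t2 t3 : ℝ) (a : ℤ × ℤ) (x y : ℝ) :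
    (starRingEnd ℂ) (Fint t1 t2 t3 a x y) =
      Complex.exp (Complex.I * π * ((a.1:ℂ) + (a.2:ℂ))) * Fint t1 t2 t3 a (π - x) (π - y) := by
  rw [Fint, Fint, map_div₀, mu_conj, ← Complex.exp_conj, ← mul_div_assoc, ← Complex.exp_add]
  congr 1
  apply exp_eq_of_int _ _ (-(a.1 + a.2))
  simp only [map_mul, map_add, Complex.conj_I, Complex.conj_ofReal, map_intCast]
  push_cast
  ring

lemma Fint_per1 (t1 t2 t3 : ℝ) (a : ℤ × ℤ) (y : ℝ) :
    Function.Periodic (fun x => Fint t1 t2 t3 a x y) (2*π) := by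
  intro x
  simp only [Fint, mu_per1]
  congr 1
  apply exp_eq_of_int _ _ a.1
  push_cast
  ring

lemma Fint_per2 (t1 t2 t3 : ℝ) (a : ℤ × ℤ) (x : ℝ) :
    Function.Periodic (fun y => Fint t1 t2 t3 a x y) (2*π) := by
  intro y
  simp only [Fint, mu_per2]
  congr 1
  apply exp_eq_of_int _ _ a.2
  push_cast
  ring

lemma conj_gcoef (t1 t2 t3 : ℝ)
    (hint : IntegrableOn (fun k : ℝ × ℝ => (mu t1 t2 t3 k)⁻¹)
      (Set.Icc (-π) π ×ˢ Set.Icc (-π) π)) (a : ℤ × ℤ) :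
    (starRingEnd ℂ) (gcoef t1 t2 t3 a)
      = Complex.exp (Complex.I * π * ((a.1:ℂ) + (a.2:ℂ))) * gcoef t1 t2 t3 a := by
  have hpi : (-π : ℝ) ≤ π := by linarith [Real.pi_pos]
  set S := Set.Icc (-π) π with hS
  set c := Complex.exp (Complex.I * π * ((a.1:ℂ) + (a.2:ℂ))) with hc
  set pref := (((2 * π) ^ 2 : ℝ) : ℂ)⁻¹ with hpref
  -- integrability
  have hF : IntegrableOn (fun k : ℝ×ℝ => Fint t1 t2 t3 a k.1 k.2) (S ×ˢ S) := by
    have hb : Integrable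
        (fun k : ℝ×ℝ => Complex.exp (Complex.I * ((k.1:ℂ)*(a.1:ℂ)+(k.2:ℂ)*(a.2:ℂ))) * (mu t1 t2 t3 k)⁻¹)
        (volume.restrict (S ×ˢ S)) := by
      refine hint.bdd_mul (c := 1) ?_ (Filter.Eventually.of_forall fun k => ?_)
      · exact (Continuous.aestronglyMeasurable (by fun_prop))
      · rw [Complex.norm_exp]; simp
    have he : (fun k : ℝ×ℝ => Fint t1 t2 t3 a k.1 k.2)
        = fun k : ℝ×ℝ => Complex.exp (Complex.I * ((k.1:ℂ)*(a.1:ℂ)+(k.2:ℂ)*(a.2:ℂ))) * (mu t1 t2 t3 k)⁻¹ := by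
      funext k; simp [Fint, div_eq_mul_inv]
    rw [he]; exact hb
  have hFc : IntegrableOn (fun k : ℝ×ℝ => (starRingEnd ℂ) (Fint t1 t2 t3 a k.1 k.2)) (S ×ˢ S) := by
    refine ⟨RCLike.continuous_conj.comp_aestronglyMeasurable hF.aestronglyMeasurable, ?_⟩
    simpa [MeasureTheory.HasFiniteIntegral] using hF.hasFiniteIntegral
  -- Fubini-type reduction to iterated interval integrals
  have hIcc : ∀ (g : ℝ → ℂ), ∫ y in S, g y = ∫ y in (-π)..π, g y := fun g => by
    rw [hS, integral_Icc_eq_integral_Ioc, intervalIntegral.integral_of_le hpi]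
  have hprod : ∀ (G : ℝ×ℝ → ℂ), IntegrableOn G (S ×ˢ S) →
      ∫ k in S ×ˢ S, G k = ∫ x in (-π)..π, ∫ y in (-π)..π, G (x, y) := by
    intro G hG
    rw [Measure.volume_eq_prod] at hG ⊢
    rw [MeasureTheory.setIntegral_prod G hG, hIcc]
    congr 1
    funext x
    exact hIcc _
  -- the key reflection identity for the inner integral
  have key : ∀ x : ℝ, (∫ y in (-π)..π, (starRingEnd ℂ) (Fint t1 t2 t3 a x y))
      = c * ∫ y in (-π)..π, Fint t1 t2 t3 a (π - x) y := by
    intro x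
    rw [intervalIntegral.integral_congr (g := fun y => c * Fint t1 t2 t3 a (π - x) (π - y))
      (fun y _ => Fint_conj t1 t2 t3 a x y),
      intervalIntegral.integral_const_mul]
    congr 1
    rw [intervalIntegral.integral_comp_sub_left (fun y => Fint t1 t2 t3 a (π - x) y) π,
      show π - π = (0:ℝ) by ring, show π - -π = 0 + 2*π by ring,
      (Fint_per2 t1 t2 t3 a (π - x)).intervalIntegral_add_eq 0 (-π),
      show -π + 2*π = π by ring]
  -- periodicity of the inner integral in the outer variable
  have hH : Function.Periodic (fun u => ∫ y in (-π)..π, Fint t1 t2 t3 a u y) (2*π) := by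
    intro u
    exact intervalIntegral.integral_congr (fun y _ => Fint_per1 t1 t2 t3 a y u)
  have h0 : gcoef t1 t2 t3 a = pref * ∫ k in S ×ˢ S, Fint t1 t2 t3 a k.1 k.2 := rfl
  calc (starRingEnd ℂ) (gcoef t1 t2 t3 a)
      = pref * (starRingEnd ℂ) (∫ k in S ×ˢ S, Fint t1 t2 t3 a k.1 k.2) := by
        rw [h0, map_mul, hpref, map_inv₀, Complex.conj_ofReal]
    _ = pref * ∫ k in S ×ˢ S, (starRingEnd ℂ) (Fint t1 t2 t3 a k.1 k.2) := by
        rw [← integral_conj]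
    _ = pref * ∫ x in (-π)..π, ∫ y in (-π)..π, (starRingEnd ℂ) (Fint t1 t2 t3 a x y) := by
        rw [hprod _ hFc]
    _ = pref * ∫ x in (-π)..π, c * ∫ y in (-π)..π, Fint t1 t2 t3 a (π - x) y := by
        rw [intervalIntegral.integral_congr (fun x _ => key x)]
    _ = pref * (c * ∫ x in (-π)..π, ∫ y in (-π)..π, Fint t1 t2 t3 a (π - x) y) := by
        rw [intervalIntegral.integral_const_mul]
    _ = pref * (c * ∫ x in (-π)..π, ∫ y in (-π)..π, Fint t1 t2 t3 a x y) := by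
        rw [intervalIntegral.integral_comp_sub_left
            (fun u => ∫ y in (-π)..π, Fint t1 t2 t3 a u y) π,
          show π - π = (0:ℝ) by ring, show π - -π = 0 + 2*π by ring,
          hH.intervalIntegral_add_eq 0 (-π), show -π + 2*π = π by ring]
    _ = c * (pref * ∫ k in S ×ˢ S, Fint t1 t2 t3 a k.1 k.2) := by
        rw [hprod _ hF]; ring
    _ = c * gcoef t1 t2 t3 a := by rw [← h0]

/-- `g_{(0,0)}` and `g_{(1,1)}` are real, while `g_{(1,0)}` and `g_{(0,1)}` are purely
imaginary. -/
theorem gcoef_real_imaginary (t1 t2 t3 : ℝ) (ht1 : 0 < t1) (ht2 : 0 < t2) (ht3 : 0 < t3)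
    (hint : IntegrableOn (fun k : ℝ × ℝ => (mu t1 t2 t3 k)⁻¹)
      (Set.Icc (-π) π ×ˢ Set.Icc (-π) π)) :
    (gcoef t1 t2 t3 (0, 0)).im = 0 ∧ (gcoef t1 t2 t3 (1, 1)).im = 0 ∧
    (gcoef t1 t2 t3 (1, 0)).re = 0 ∧ (gcoef t1 t2 t3 (0, 1)).re = 0 := by
  have h00 := conj_gcoef t1 t2 t3 hint (0, 0)
  have h11 := conj_gcoef t1 t2 t3 hint (1, 1)
  have h10 := conj_gcoef t1 t2 t3 hint (1, 0)
  have h01 := conj_gcoef t1 t2 t3 hint (0, 1)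
  rw [show Complex.I * π * (((0:ℤ):ℂ) + ((0:ℤ):ℂ)) = 0 by push_cast; ring,
    Complex.exp_zero, one_mul] at h00
  rw [show Complex.I * π * (((1:ℤ):ℂ) + ((1:ℤ):ℂ)) = 2*(π:ℂ)*Complex.I by push_cast; ring,
    Complex.exp_two_pi_mul_I, one_mul] at h11
  rw [show Complex.I * π * (((1:ℤ):ℂ) + ((0:ℤ):ℂ)) = (π:ℂ)*Complex.I by push_cast; ring,
    Complex.exp_pi_mul_I] at h10
  rw [show Complex.I * π * (((0:ℤ):ℂ) + ((1:ℤ):ℂ)) = (π:ℂ)*Complex.I by push_cast; ring,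
    Complex.exp_pi_mul_I] at h01
  refine ⟨Complex.conj_eq_iff_im.mp h00, Complex.conj_eq_iff_im.mp h11, ?_, ?_⟩
  · have := congrArg Complex.re h10
    simp only [Complex.conj_re, Complex.neg_re, neg_one_mul, Complex.neg_im] at this
    linarith
  · have := congrArg Complex.re h01
    simp only [Complex.conj_re, Complex.neg_re, neg_one_mul, Complex.neg_im] at this
    linarith
end

section
/- Assume t1 ≠ t2 and that k ↦ 1/μ(k) is Lebesgue integrable on [−π,π]². Then the following two residue-theorem identities hold: (2π)^{−2} ∫_{[−π,π]²} 1/μ(k) dk = (2π)^{−1} ∫_{−π}^{π} 1{|A(θ)| > |B(θ)|} / A(θ) dθ, and (2π)^{−2} ∫_{[−π,π]²} exp(i k1)/μ(k) dk = (2π)^{−1} ∫_{−π}^{π} exp(iθ) · 1{|A(θ)| > |B(θ)|} / A(θ) dθ, where 1{·} denotes the indicator function. (Note that |A(θ)|² = t1² + t2² − 2 t1 t2 sin θ ≥ (t1−t2)² > 0, so the right-hand integrands are bounded.) -/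
open Complex Real MeasureTheory

/-- `A(θ) = t₁ + i t₂ e^{iθ}`. -/
noncomputable def Afun (t1 t2 : ℝ) (θ : ℝ) : ℂ :=
  (t1 : ℂ) + Complex.I * (t2 : ℂ) * Complex.exp (Complex.I * (θ : ℂ))

/-- `B(θ) = i + t₃ e^{iθ}`. -/
noncomputable def Bfun (t3 : ℝ) (θ : ℝ) : ℂ :=
  Complex.I + (t3 : ℂ) * Complex.exp (Complex.I * (θ : ℂ))

namespace ResidueAux

open Set

lemma integral_exp_int (n : ℤ) (hn : n ≠ 0) :
    ∫ θ : ℝ in (-π)..π, Complex.exp ((n : ℂ) * Complex.I * θ) = 0 := by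
  have hc : (n : ℂ) * Complex.I ≠ 0 := by
    simp [Complex.I_ne_zero, hn]
  rw [integral_exp_mul_complex hc]
  have h : ((n:ℂ) * Complex.I * ((π:ℝ):ℂ)) = (n:ℂ) * Complex.I * (((-π:ℝ)):ℂ) + (n:ℂ)*(2*(π:ℂ)*Complex.I) := by
    push_cast; ring
  rw [h, Complex.exp_add, Complex.exp_int_mul_two_pi_mul_I, mul_one, sub_self, zero_div]

lemma integral_exp_int_Ioc (n : ℤ) (hn : n ≠ 0) :
    ∫ θ : ℝ in Ioc (-π) π, Complex.exp ((n : ℂ) * Complex.I * θ) = 0 := by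
  rw [← intervalIntegral.integral_of_le (by linarith [Real.pi_pos] : -π ≤ π)]
  exact integral_exp_int n hn

lemma abs_exp_I_real (θ : ℝ) : ‖Complex.exp (Complex.I * θ)‖ = 1 := by
  rw [Complex.norm_exp]
  simp

lemma inner_core1 (A B : ℂ) (hAB : ‖B‖ < ‖A‖) :
    ∫ θ : ℝ in Ioc (-π) π, (A - B * Complex.exp (Complex.I * θ))⁻¹
      = 2 * π / A := by
  have hApos : (0:ℝ) < ‖A‖ := lt_of_le_of_lt (norm_nonneg B) hAB
  have hA : A ≠ 0 := by
    intro h; rw [h] at hApos; simp at hApos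
  set w : ℂ := B / A with hw
  have hwn : ‖w‖ < 1 := by
    rw [hw, norm_div]
    exact (div_lt_one hApos).2 hAB
  set f : ℕ → ℝ → ℂ := fun n θ => A⁻¹ * (w * Complex.exp (Complex.I * θ))^n with hf
  have key : ∀ θ : ℝ, (A - B * Complex.exp (Complex.I * θ))⁻¹ = ∑' n, f n θ := by
    intro θ
    have habs : ‖w * Complex.exp (Complex.I * θ)‖ < 1 := by
      rw [norm_mul, abs_exp_I_real, mul_one]; exact hwn
    rw [hf]
    simp only
    rw [tsum_mul_left, tsum_geometric_of_norm_lt_one habs, ← mul_inv]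
    congr 1
    field_simp [hw]
    rw [hw]
    linear_combination (Complex.exp (Complex.I * θ)) * (by field_simp : A * (B / A) = B)
  have hcont : ∀ n, Continuous (f n) := by
    intro n
    exact continuous_const.mul ((continuous_const.mul
      ((Complex.continuous_exp.comp (continuous_const.mul Complex.continuous_ofReal)))).pow n)
  have hint : ∀ n, IntegrableOn (f n) (Ioc (-π) π) := fun n =>
    (hcont n).integrableOn_Ioc
  have hnorm : ∀ n θ, ‖f n θ‖ = ‖A⁻¹‖ * ‖w‖^n := by
    intro n θ
    rw [hf]
    simp only [norm_mul, norm_pow, norm_mul, abs_exp_I_real, mul_one]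
  have hsum : Summable fun n => ∫ θ in Ioc (-π) π, ‖f n θ‖ := by
    have : (fun n => ∫ θ in Ioc (-π) π, ‖f n θ‖)
        = fun n => (2*π) * (‖A⁻¹‖ * ‖w‖^n) := by
      funext n
      simp only [hnorm]
      rw [setIntegral_const, Real.volume_real_Ioc_of_le (by linarith [Real.pi_pos] : -π ≤ π), smul_eq_mul]
      congr 1
      ring
    rw [this]
    exact ((summable_geometric_of_lt_one (by positivity) hwn).mul_left _).mul_left _
  have swap := MeasureTheory.integral_tsum_of_summable_integral_norm hint hsum
  have hterm : ∀ n : ℕ, (∫ θ in Ioc (-π) π, f n θ)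
      = if n = 0 then A⁻¹ * (2*π) else 0 := by
    intro n
    rcases eq_or_ne n 0 with h0 | h0
    · subst h0
      rw [if_pos rfl]
      simp only [hf, pow_zero, mul_one]
      rw [setIntegral_const, Real.volume_real_Ioc_of_le (by linarith [Real.pi_pos] : -π ≤ π), Complex.real_smul]
      push_cast; ring
    · rw [if_neg h0]
      have : ∀ θ : ℝ, f n θ = (A⁻¹ * w^n) * Complex.exp (((n:ℤ):ℂ) * Complex.I * (θ:ℂ)) := by
        intro θ
        rw [hf]
        simp only
        rw [mul_pow, ← Complex.exp_nat_mul]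
        push_cast
        ring_nf
      rw [show (fun θ : ℝ => f n θ) = fun θ : ℝ => (A⁻¹ * w^n) * Complex.exp (((n:ℤ):ℂ) * Complex.I * (θ:ℂ)) from funext this]
      rw [integral_const_mul, integral_exp_int_Ioc n (by exact_mod_cast h0), mul_zero]
  calc ∫ θ : ℝ in Ioc (-π) π, (A - B * Complex.exp (Complex.I * θ))⁻¹
      = ∫ θ : ℝ in Ioc (-π) π, ∑' n, f n θ := by
        exact integral_congr_ae (Filter.Eventually.of_forall fun θ => key θ)
    _ = ∑' n, ∫ θ in Ioc (-π) π, f n θ := swap.symm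
    _ = A⁻¹ * (2*π) := by
        rw [show (fun n => ∫ θ in Ioc (-π) π, f n θ) = fun n => if n = 0 then A⁻¹*(2*(π:ℂ)) else 0 from funext hterm]
        exact tsum_eq_single 0 (fun b hb => if_neg hb)
    _ = 2 * π / A := by rw [div_eq_mul_inv]; ring

lemma inner_core2 (A B : ℂ) (hAB : ‖A‖ < ‖B‖) :
    ∫ θ : ℝ in Ioc (-π) π, (A - B * Complex.exp (Complex.I * θ))⁻¹ = 0 := by
  have hBpos : (0:ℝ) < ‖B‖ := lt_of_le_of_lt (norm_nonneg A) hAB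
  have hB : B ≠ 0 := by
    intro h; rw [h] at hBpos; simp at hBpos
  set w : ℂ := A / B with hw
  have hwn : ‖w‖ < 1 := by
    rw [hw, norm_div]
    exact (div_lt_one hBpos).2 hAB
  set f : ℕ → ℝ → ℂ := fun n θ =>
    (-B⁻¹ * Complex.exp (-(Complex.I * θ))) * (w * Complex.exp (-(Complex.I * θ)))^n with hf
  have habsneg : ∀ θ : ℝ, ‖Complex.exp (-(Complex.I * θ))‖ = 1 := by
    intro θ
    have := abs_exp_I_real (-θ)
    rw [show Complex.I * ((-θ : ℝ) : ℂ) = -(Complex.I * θ) by push_cast; ring] at this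
    exact this
  have key : ∀ θ : ℝ, (A - B * Complex.exp (Complex.I * θ))⁻¹ = ∑' n, f n θ := by
    intro θ
    have habs : ‖w * Complex.exp (-(Complex.I * θ))‖ < 1 := by
      rw [norm_mul, habsneg, mul_one]; exact hwn
    rw [hf]
    simp only
    rw [tsum_mul_left, tsum_geometric_of_norm_lt_one habs]
    have hE : Complex.exp (Complex.I * θ) ≠ 0 := Complex.exp_ne_zero _
    have hexp : Complex.exp (-(Complex.I * θ)) = (Complex.exp (Complex.I * θ))⁻¹ :=
      Complex.exp_neg _
    rw [hexp, show -B⁻¹ * (Complex.exp (Complex.I * θ))⁻¹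
        = (-(B * Complex.exp (Complex.I * θ)))⁻¹ by rw [inv_neg, mul_inv, neg_mul], ← mul_inv]
    congr 1
    field_simp [hw]
    rw [hw]
    linear_combination -(by field_simp : B * (A / B) = A)
  have hcont : ∀ n, Continuous (f n) := by
    intro n
    have he : Continuous fun θ : ℝ => Complex.exp (-(Complex.I * θ)) :=
      Complex.continuous_exp.comp (continuous_const.mul Complex.continuous_ofReal).neg
    exact (continuous_const.mul he).mul ((continuous_const.mul he).pow n)
  have hint : ∀ n, IntegrableOn (f n) (Ioc (-π) π) := fun n => (hcont n).integrableOn_Ioc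
  have hnorm : ∀ n θ, ‖f n θ‖ = ‖B⁻¹‖ * ‖w‖^n := by
    intro n θ
    rw [hf]
    simp only [norm_mul, norm_pow, norm_neg, habsneg, mul_one]
  have hsum : Summable fun n => ∫ θ in Ioc (-π) π, ‖f n θ‖ := by
    have : (fun n => ∫ θ in Ioc (-π) π, ‖f n θ‖) = fun n => (2*π) * (‖B⁻¹‖ * ‖w‖^n) := by
      funext n
      simp only [hnorm]
      rw [setIntegral_const, Real.volume_real_Ioc_of_le (by linarith [Real.pi_pos] : -π ≤ π), smul_eq_mul]
      ring
    rw [this]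
    exact ((summable_geometric_of_lt_one (by positivity) hwn).mul_left _).mul_left _
  have swap := MeasureTheory.integral_tsum_of_summable_integral_norm hint hsum
  have hterm : ∀ n : ℕ, (∫ θ in Ioc (-π) π, f n θ) = 0 := by
    intro n
    have hre : ∀ θ : ℝ, f n θ
        = (-B⁻¹ * w^n) * Complex.exp (((-1 - (n:ℤ) : ℤ):ℂ) * Complex.I * (θ:ℂ)) := by
      intro θ
      rw [hf]
      simp only
      rw [mul_pow, ← Complex.exp_nat_mul]
      rw [show (-B⁻¹ * Complex.exp (-(Complex.I * θ))) * (w^n * Complex.exp ((n:ℂ) * -(Complex.I * θ)))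
          = (-B⁻¹ * w^n) * (Complex.exp (-(Complex.I * θ)) * Complex.exp ((n:ℂ) * -(Complex.I * θ))) by ring,
        ← Complex.exp_add]
      congr 1
      push_cast
      ring
    rw [show (fun θ : ℝ => f n θ)
        = fun θ : ℝ => (-B⁻¹ * w^n) * Complex.exp (((-1 - (n:ℤ) : ℤ):ℂ) * Complex.I * (θ:ℂ)) from funext hre]
    rw [integral_const_mul, integral_exp_int_Ioc (-1 - n) (by omega), mul_zero]
  calc ∫ θ : ℝ in Ioc (-π) π, (A - B * Complex.exp (Complex.I * θ))⁻¹
      = ∫ θ : ℝ in Ioc (-π) π, ∑' n, f n θ :=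
        integral_congr_ae (Filter.Eventually.of_forall fun θ => key θ)
    _ = ∑' n, ∫ θ in Ioc (-π) π, f n θ := swap.symm
    _ = 0 := by simp [hterm]

lemma injOn_sin_shift (k : ℤ) : Set.InjOn Real.sin (Icc (k*π - π/2) (k*π + π/2)) := by
  intro x hx y hy h
  have hs : ∀ z : ℝ, Real.sin (z - k*π) = Real.cos (k*π) * Real.sin z := by
    intro z
    rw [Real.sin_sub, Real.sin_int_mul_pi, mul_zero, sub_zero, mul_comm]
  have hx' : x - k*π ∈ Icc (-(π/2)) (π/2) := by
    constructor <;> [linarith [hx.1]; linarith [hx.2]]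
  have hy' : y - k*π ∈ Icc (-(π/2)) (π/2) := by
    constructor <;> [linarith [hy.1]; linarith [hy.2]]
  have := Real.injOn_sin hx' hy' (by rw [hs, hs, h])
  linarith [this]

lemma countable_sin_eq (c : ℝ) : Set.Countable {x : ℝ | Real.sin x = c} := by
  have hcover : {x : ℝ | Real.sin x = c}
      ⊆ ⋃ k : ℤ, (Icc (k*π - π/2) (k*π + π/2) ∩ {x : ℝ | Real.sin x = c}) := by
    intro x hx
    have hπ := Real.pi_pos
    refine Set.mem_iUnion.2 ⟨round (x/π), ⟨?_, hx⟩⟩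
    have h1 : |x/π - round (x/π)| ≤ 1/2 := abs_sub_round (x/π)
    rw [abs_le] at h1
    constructor
    · have h0 : (round (x/π) : ℝ) - 1/2 ≤ x/π := by linarith [h1.1]
      have h2 : ((round (x/π) : ℝ) - 1/2) * π ≤ x := by
        calc ((round (x/π) : ℝ) - 1/2) * π ≤ (x/π) * π := by nlinarith
        _ = x := by field_simp
      nlinarith
    · have h0 : x/π ≤ round (x/π) + 1/2 := by linarith [h1.2]
      have h2 : x ≤ ((round (x/π) : ℝ) + 1/2) * π := by
        calc x = (x/π) * π := by field_simp
        _ ≤ ((round (x/π) : ℝ) + 1/2) * π := by nlinarith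
      nlinarith
  refine Set.Countable.mono hcover (Set.countable_iUnion fun k => ?_)
  apply Set.Subsingleton.countable
  intro a ha b hb
  exact injOn_sin_shift k ha.1 hb.1 (by rw [ha.2, hb.2])

lemma measure_sin_eq (c : ℝ) : volume {x : ℝ | Real.sin x = c} = 0 :=
  (countable_sin_eq c).measure_zero _

lemma sq_abs_A (t1 t2 θ : ℝ) :
    (‖Afun t1 t2 θ‖)^2 = t1^2 + t2^2 - 2*t1*t2*Real.sin θ := by
  rw [Complex.sq_norm, Afun]
  simp [Complex.normSq_apply, Complex.exp_re, Complex.exp_im, Complex.add_re, Complex.add_im,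
    Complex.mul_re, Complex.mul_im]
  linear_combination (t2^2) * Real.sin_sq_add_cos_sq θ

lemma sq_abs_B (t3 θ : ℝ) :
    (‖Bfun t3 θ‖)^2 = 1 + t3^2 + 2*t3*Real.sin θ := by
  rw [Complex.sq_norm, Bfun]
  simp [Complex.normSq_apply, Complex.exp_re, Complex.exp_im, Complex.add_re, Complex.add_im,
    Complex.mul_re, Complex.mul_im]
  linear_combination (t3^2) * Real.sin_sq_add_cos_sq θ

lemma ae_abs_ne (t1 t2 t3 : ℝ) (ht1 : 0 < t1) (ht2 : 0 < t2) (ht3 : 0 < t3) :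
    ∀ᵐ θ : ℝ, ‖Afun t1 t2 θ‖ ≠ ‖Bfun t3 θ‖ := by
  set c : ℝ := (t1^2 + t2^2 - 1 - t3^2) / (2*(t1*t2 + t3)) with hc
  rw [ae_iff]
  refine measure_mono_null ?_ (measure_sin_eq c)
  intro θ hθ
  simp only [Set.mem_setOf_eq, not_not] at hθ
  have hsq : (‖Afun t1 t2 θ‖)^2 = (‖Bfun t3 θ‖)^2 := by rw [hθ]
  rw [sq_abs_A, sq_abs_B] at hsq
  have hden : (0:ℝ) < 2*(t1*t2 + t3) := by positivity
  show Real.sin θ = c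
  rw [hc]
  field_simp
  linarith

lemma mu_eq (t1 t2 t3 : ℝ) (k : ℝ × ℝ) :
    mu t1 t2 t3 k = Afun t1 t2 k.1 - Bfun t3 k.1 * Complex.exp (Complex.I * (k.2 : ℂ)) := by
  rw [mu, Afun, Bfun, mul_add, Complex.exp_add]
  ring

lemma pipeline (t1 t2 t3 : ℝ) (ht1 : 0 < t1) (ht2 : 0 < t2) (ht3 : 0 < t3)
    (φ : ℝ → ℂ) (hφ : Continuous φ) (hbd : ∃ C, ∀ x : ℝ × ℝ, ‖φ x.1‖ ≤ C)
    (hint : IntegrableOn (fun k : ℝ × ℝ => (mu t1 t2 t3 k)⁻¹)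
      (Icc (-π) π ×ˢ Icc (-π) π)) :
    (∫ k in Icc (-π) π ×ˢ Icc (-π) π, φ k.1 * (mu t1 t2 t3 k)⁻¹)
      = (2*π:ℂ) * ∫ θ in Ioc (-π) π,
          φ θ * (if ‖Bfun t3 θ‖ < ‖Afun t1 t2 θ‖
            then (Afun t1 t2 θ)⁻¹ else 0) := by
  have hπ := Real.pi_pos
  have hint2 : IntegrableOn (fun k : ℝ × ℝ => φ k.1 * (mu t1 t2 t3 k)⁻¹)
      (Icc (-π) π ×ˢ Icc (-π) π) :=
    by obtain ⟨C, hC⟩ := hbd; exact hint.bdd_mul ((hφ.comp continuous_fst).aestronglyMeasurable) (Filter.Eventually.of_forall hC)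
  rw [Measure.volume_eq_prod] at hint2 ⊢
  rw [MeasureTheory.setIntegral_prod _ hint2]
  rw [MeasureTheory.integral_Icc_eq_integral_Ioc]
  have hae : ∀ᵐ x ∂(volume.restrict (Ioc (-π) π)),
      (∫ y in Icc (-π) π, φ x * (mu t1 t2 t3 (x, y))⁻¹)
        = (2*π:ℂ) * (φ x * (if ‖Bfun t3 x‖ < ‖Afun t1 t2 x‖
            then (Afun t1 t2 x)⁻¹ else 0)) := by
    refine ae_restrict_of_ae ?_
    filter_upwards [ae_abs_ne t1 t2 t3 ht1 ht2 ht3] with x hx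
    rw [MeasureTheory.integral_Icc_eq_integral_Ioc]
    simp_rw [mu_eq t1 t2 t3]
    rw [integral_const_mul]
    by_cases h : ‖Bfun t3 x‖ < ‖Afun t1 t2 x‖
    · rw [inner_core1 _ _ h, if_pos h, div_eq_mul_inv]
      ring
    · have h' : ‖Afun t1 t2 x‖ < ‖Bfun t3 x‖ :=
        lt_of_le_of_ne (not_lt.1 h) hx
      rw [inner_core2 _ _ h', if_neg h]
      ring
  rw [integral_congr_ae hae, integral_const_mul]

end ResidueAux

open ResidueAux in
/-- Residue-theorem identities:
`(2π)⁻² ∫_{[−π,π]²} e^{i k₁ a₁}/μ(k) dk = (2π)⁻¹ ∫_{−π}^{π} 1{|A|>|B|}/A dθ` for `a₁ = 0, 1`. -/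
theorem residue_identities_A (t1 t2 t3 : ℝ) (ht1 : 0 < t1) (ht2 : 0 < t2) (ht3 : 0 < t3)
    (h12 : t1 ≠ t2)
    (hint : IntegrableOn (fun k : ℝ × ℝ => (mu t1 t2 t3 k)⁻¹)
      (Set.Icc (-π) π ×ˢ Set.Icc (-π) π)) :
    (((2 * π) ^ 2 : ℝ) : ℂ)⁻¹ *
        (∫ k in Set.Icc (-π) π ×ˢ Set.Icc (-π) π, (mu t1 t2 t3 k)⁻¹)
      = ((2 * π : ℝ) : ℂ)⁻¹ *
        ∫ θ in (-π)..π,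
          (if ‖Bfun t3 θ‖ < ‖Afun t1 t2 θ‖
            then (Afun t1 t2 θ)⁻¹ else 0) ∧
    (((2 * π) ^ 2 : ℝ) : ℂ)⁻¹ *
        (∫ k in Set.Icc (-π) π ×ˢ Set.Icc (-π) π,
          Complex.exp (Complex.I * (k.1 : ℂ)) / mu t1 t2 t3 k)
      = ((2 * π : ℝ) : ℂ)⁻¹ *
        ∫ θ in (-π)..π,
          (if ‖Bfun t3 θ‖ < ‖Afun t1 t2 θ‖
            then Complex.exp (Complex.I * (θ : ℂ)) * (Afun t1 t2 θ)⁻¹ else 0) := by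
  have hπ := Real.pi_pos
  have hle : -π ≤ π := by linarith
  have hπc : ((π:ℝ):ℂ) ≠ 0 := by
    exact_mod_cast Real.pi_ne_zero
  constructor
  · have P := pipeline t1 t2 t3 ht1 ht2 ht3 (fun _ => (1:ℂ)) continuous_const
      ⟨1, fun x => by simp⟩ hint
    simp only [one_mul] at P
    rw [P, intervalIntegral.integral_of_le hle]
    push_cast
    field_simp
  · have P := pipeline t1 t2 t3 ht1 ht2 ht3 (fun θ : ℝ => Complex.exp (Complex.I * (θ:ℂ)))
      (Complex.continuous_exp.comp (continuous_const.mul Complex.continuous_ofReal))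
      ⟨1, fun x => le_of_eq (abs_exp_I_real x.1)⟩ hint
    simp only [div_eq_mul_inv]
    rw [P, intervalIntegral.integral_of_le hle]
    have hcongr : ∀ θ : ℝ,
        Complex.exp (Complex.I * (θ:ℂ)) *
          (if ‖Bfun t3 θ‖ < ‖Afun t1 t2 θ‖
            then (Afun t1 t2 θ)⁻¹ else 0)
        = (if ‖Bfun t3 θ‖ < ‖Afun t1 t2 θ‖
            then Complex.exp (Complex.I * (θ:ℂ)) * (Afun t1 t2 θ)⁻¹ else 0) := by
      intro θ
      split_ifs <;> simp
    simp_rw [hcongr]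
    push_cast
    field_simp
end

section
/- Assume t3 ≠ 1 and that k ↦ 1/μ(k) is Lebesgue integrable on [−π,π]². Then the following two residue-theorem identities hold: (2π)^{−2} ∫_{[−π,π]²} exp(i k2)/μ(k) dk = −(2π)^{−1} ∫_{−π}^{π} 1{|A(θ)| < |B(θ)|} / B(θ) dθ, and (2π)^{−2} ∫_{[−π,π]²} exp(i(k1+k2))/μ(k) dk = −(2π)^{−1} ∫_{−π}^{π} exp(iθ) · 1{|A(θ)| < |B(θ)|} / B(θ) dθ, where 1{·} denotes the indicator function. (Note that |B(θ)|² = 1 + t3² + 2 t3 sin θ ≥ (1−t3)² > 0, so the right-hand integrands are bounded.) -/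
open Complex Real MeasureTheory

lemma exp_deriv_aux (a : ℂ) (k : ℝ) :
    HasDerivAt (fun x : ℝ => Complex.exp (a * x)) (a * Complex.exp (a * k)) k := by
  have h : HasDerivAt (fun z : ℂ => Complex.exp (a * z)) (Complex.exp (a * k) * (a * 1)) (k : ℂ) :=
    ((hasDerivAt_id (k : ℂ)).const_mul a).cexp
  simpa [mul_comm] using h.comp_ofReal

lemma circle_int_lt (c : ℂ) (hc : ‖c‖ < 1) :
    (∫ k in (-π : ℝ)..π,
        Complex.exp (Complex.I * k) / (Complex.exp (Complex.I * k) - c))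
      = ((2 * π : ℝ) : ℂ) := by
  have hden : ∀ k : ℝ, Complex.exp (Complex.I * k) - c ≠ 0 := by
    intro k h
    have : Complex.exp (Complex.I * k) = c := by linear_combination h
    have habs : ‖Complex.exp (Complex.I * k)‖ = 1 := by
      simpa [mul_comm] using Complex.norm_exp_ofReal_mul_I k
    rw [this] at habs; linarith
  have habs1 : ∀ k : ℝ, ‖c * Complex.exp (-Complex.I * k)‖ < 1 := by
    intro k
    have : ‖Complex.exp (-Complex.I * k)‖ = 1 := by
      simpa [mul_comm, neg_mul, mul_neg] using Complex.norm_exp_ofReal_mul_I (-k)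
    rw [norm_mul, this, mul_one]; exact hc
  have hden2 : ∀ k : ℝ, (1 : ℂ) - c * Complex.exp (-Complex.I * k) ≠ 0 := by
    intro k h
    have : ‖c * Complex.exp (-Complex.I * k)‖ = 1 := by
      have : c * Complex.exp (-Complex.I * k) = 1 := by linear_combination -h
      rw [this]; simp
    have := habs1 k; linarith
  have hslit : ∀ k : ℝ, (1 : ℂ) - c * Complex.exp (-Complex.I * k) ∈ Complex.slitPlane := by
    intro k
    rw [Complex.mem_slitPlane_iff]
    left
    have := Complex.re_le_norm (c * Complex.exp (-Complex.I * k))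
    have := habs1 k
    simp only [Complex.sub_re, Complex.one_re]
    linarith
  set F : ℝ → ℂ := fun k => (k : ℂ) - Complex.I * Complex.log (1 - c * Complex.exp (-Complex.I * k)) with hF
  have hderiv : ∀ k : ℝ, HasDerivAt F
      (Complex.exp (Complex.I * k) / (Complex.exp (Complex.I * k) - c)) k := by
    intro k
    have h1 : HasDerivAt (fun x : ℝ => (1 : ℂ) - c * Complex.exp (-Complex.I * x))
        (-(c * (-Complex.I * Complex.exp (-Complex.I * k)))) k :=
      ((exp_deriv_aux (-Complex.I) k).const_mul c).const_sub 1
    have h2 := (h1.clog_real (hslit k)).const_mul Complex.I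
    have h3 := (Complex.ofRealCLM.hasDerivAt (x := k)).sub h2
    have hne := hden2 k
    have hne2 := hden k
    have hexp : Complex.exp (Complex.I * k) * Complex.exp (-Complex.I * k) = 1 := by
      rw [← Complex.exp_add]; ring_nf; exact Complex.exp_zero
    have key : Complex.exp (Complex.I * k) / (Complex.exp (Complex.I * k) - c)
        = Complex.ofRealCLM (1:ℝ) - Complex.I *
          (-(c * (-Complex.I * Complex.exp (-Complex.I * k))) / (1 - c * Complex.exp (-Complex.I * k))) := by
      simp only [Complex.ofRealCLM_apply, Complex.ofReal_one]
      have step1 : Complex.exp (Complex.I * k) / (Complex.exp (Complex.I * k) - c)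
          = 1 / (1 - c * Complex.exp (-Complex.I * k)) := by
        rw [div_eq_div_iff hne2 hne]; linear_combination (-c) * hexp
      rw [step1, eq_sub_iff_add_eq, mul_div_assoc' Complex.I, ← add_div,
        div_eq_one_iff_eq hne]
      linear_combination (c * Complex.exp (-Complex.I * k)) * Complex.I_sq
    rw [key]
    exact h3
  have hcont : Continuous fun k : ℝ =>
      Complex.exp (Complex.I * k) / (Complex.exp (Complex.I * k) - c) := by
    apply Continuous.div
    · fun_prop
    · fun_prop
    · exact hden
  rw [intervalIntegral.integral_eq_sub_of_hasDerivAt (fun x _ => hderiv x)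
    (hcont.intervalIntegrable _ _)]
  have e1 : Complex.exp (-Complex.I * ((π : ℝ) : ℂ)) = -1 := by
    rw [neg_mul, Complex.exp_neg, mul_comm, Complex.exp_pi_mul_I]; norm_num
  have e2 : Complex.exp (-Complex.I * (((-π : ℝ)) : ℂ)) = -1 := by
    push_cast
    rw [mul_neg, neg_mul, neg_neg, mul_comm, Complex.exp_pi_mul_I]
  simp only [hF, e1, e2]
  push_cast
  ring

lemma circle_int_gt (c : ℂ) (hc : 1 < ‖c‖) :
    (∫ k in (-π : ℝ)..π,
        Complex.exp (Complex.I * k) / (Complex.exp (Complex.I * k) - c))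
      = 0 := by
  have hc0 : c ≠ 0 := by
    intro h; rw [h] at hc; simp at hc; linarith
  have hden : ∀ k : ℝ, Complex.exp (Complex.I * k) - c ≠ 0 := by
    intro k h
    have : Complex.exp (Complex.I * k) = c := by linear_combination h
    have habs : ‖Complex.exp (Complex.I * k)‖ = 1 := by
      simpa [mul_comm] using Complex.norm_exp_ofReal_mul_I k
    rw [this] at habs; linarith
  have habs1 : ∀ k : ℝ, ‖Complex.exp (Complex.I * k) / c‖ < 1 := by
    intro k
    have h1 : ‖Complex.exp (Complex.I * k)‖ = 1 := by
      simpa [mul_comm] using Complex.norm_exp_ofReal_mul_I k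
    rw [norm_div, h1]
    rw [div_lt_one (by linarith)]; exact hc
  have hden2 : ∀ k : ℝ, (1 : ℂ) - Complex.exp (Complex.I * k) / c ≠ 0 := by
    intro k h
    have h2 : ‖Complex.exp (Complex.I * k) / c‖ = 1 := by
      have : Complex.exp (Complex.I * k) / c = 1 := by linear_combination -h
      rw [this]; simp
    have := habs1 k; linarith
  have hslit : ∀ k : ℝ, (1 : ℂ) - Complex.exp (Complex.I * k) / c ∈ Complex.slitPlane := by
    intro k
    rw [Complex.mem_slitPlane_iff]
    left
    have := Complex.re_le_norm (Complex.exp (Complex.I * k) / c)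
    have := habs1 k
    simp only [Complex.sub_re, Complex.one_re]
    linarith
  set F : ℝ → ℂ := fun k => -Complex.I * Complex.log (1 - Complex.exp (Complex.I * k) / c) with hF
  have hderiv : ∀ k : ℝ, HasDerivAt F
      (Complex.exp (Complex.I * k) / (Complex.exp (Complex.I * k) - c)) k := by
    intro k
    have h1 : HasDerivAt (fun x : ℝ => (1 : ℂ) - Complex.exp (Complex.I * x) / c)
        (-(Complex.I * Complex.exp (Complex.I * k) / c)) k :=
      ((exp_deriv_aux Complex.I k).div_const c).const_sub 1
    have h2 := (h1.clog_real (hslit k)).const_mul (-Complex.I)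
    have hne := hden2 k
    have hne2 := hden k
    have hcc : c * c⁻¹ = 1 := mul_inv_cancel₀ hc0
    have key : Complex.exp (Complex.I * k) / (Complex.exp (Complex.I * k) - c)
        = -Complex.I * (-(Complex.I * Complex.exp (Complex.I * k) / c)
            / (1 - Complex.exp (Complex.I * k) / c)) := by
      rw [eq_comm, mul_div_assoc' (-Complex.I), div_eq_div_iff hne hne2]
      linear_combination (Complex.exp (Complex.I * k)^2/c
          - Complex.exp (Complex.I * k)*c/c) * Complex.I_sq
        + Complex.exp (Complex.I * k) * hcc
    rw [key]
    exact h2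
  have hcont : Continuous fun k : ℝ =>
      Complex.exp (Complex.I * k) / (Complex.exp (Complex.I * k) - c) := by
    apply Continuous.div
    · fun_prop
    · fun_prop
    · exact hden
  rw [intervalIntegral.integral_eq_sub_of_hasDerivAt (fun x _ => hderiv x)
    (hcont.intervalIntegrable _ _)]
  have e1 : Complex.exp (Complex.I * ((π : ℝ) : ℂ)) = -1 := by
    rw [mul_comm]; exact Complex.exp_pi_mul_I
  have e2 : Complex.exp (Complex.I * (((-π : ℝ)) : ℂ)) = -1 := by
    push_cast
    rw [mul_neg, Complex.exp_neg, mul_comm, Complex.exp_pi_mul_I]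
    norm_num
  simp only [hF, e1, e2]
  ring

lemma AB_int (A B : ℂ) (hB : B ≠ 0) (hAB : ‖A‖ ≠ ‖B‖) :
    (∫ k in (-π : ℝ)..π,
        Complex.exp (Complex.I * k) / (A - B * Complex.exp (Complex.I * k)))
      = if ‖A‖ < ‖B‖ then -(((2 * π : ℝ) : ℂ) / B) else 0 := by
  have hBpos : 0 < ‖B‖ := by
    simpa [norm_pos_iff] using hB
  have habsexp : ∀ k : ℝ, ‖Complex.exp (Complex.I * k)‖ = 1 := by
    intro k; simpa [mul_comm] using Complex.norm_exp_ofReal_mul_I k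
  have hne : ∀ k : ℝ, A - B * Complex.exp (Complex.I * k) ≠ 0 := by
    intro k h
    have hA : A = B * Complex.exp (Complex.I * k) := by linear_combination h
    have habs := congrArg (‖·‖) hA
    rw [norm_mul, habsexp k, mul_one] at habs
    exact hAB habs
  have hne2 : ∀ k : ℝ, Complex.exp (Complex.I * k) - A / B ≠ 0 := by
    intro k h
    have hA : Complex.exp (Complex.I * k) = A / B := by linear_combination h
    have habs := congrArg (‖·‖) hA
    rw [habsexp k, norm_div, eq_comm, div_eq_one_iff_eq hBpos.ne'] at habs
    exact hAB habs
  have hrw : ∀ k : ℝ, Complex.exp (Complex.I * k) / (A - B * Complex.exp (Complex.I * k))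
      = (-B⁻¹) * (Complex.exp (Complex.I * k) / (Complex.exp (Complex.I * k) - A / B)) := by
    intro k
    rw [mul_div_assoc' (-B⁻¹), div_eq_div_iff (hne k) (hne2 k)]
    linear_combination (-(Complex.exp (Complex.I * k))^2) * (mul_inv_cancel₀ hB)
  simp only [hrw]
  rw [intervalIntegral.integral_const_mul]
  have habsAB : ‖A / B‖ = ‖A‖ / ‖B‖ := norm_div _ _
  by_cases h : ‖A‖ < ‖B‖
  · rw [if_pos h, circle_int_lt (A / B) (by rw [habsAB, div_lt_one hBpos]; exact h)]
    field_simp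
  · rw [if_neg h, circle_int_gt (A / B), mul_zero]
    rw [habsAB, lt_div_iff₀ hBpos, one_mul]
    rcases lt_or_eq_of_le (not_lt.mp h) with h' | h'
    · exact h'
    · exact absurd h'.symm hAB

lemma mu_split (t1 t2 t3 : ℝ) (θ y : ℝ) :
    mu t1 t2 t3 (θ, y) = Afun t1 t2 θ - Bfun t3 θ * Complex.exp (Complex.I * y) := by
  simp only [mu, Afun, Bfun, mul_add, Complex.exp_add]
  ring

lemma Bfun_ne (t3 : ℝ) (ht3 : 0 < t3) (h31 : t3 ≠ 1) (θ : ℝ) : Bfun t3 θ ≠ 0 := by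
  intro h
  have h2 : (t3 : ℂ) * Complex.exp (Complex.I * θ) = -Complex.I := by
    rw [Bfun] at h; linear_combination h
  have := congrArg (‖·‖) h2
  rw [norm_mul] at this
  simp [Complex.norm_real, abs_of_pos ht3,
    (by simpa [mul_comm] using Complex.norm_exp_ofReal_mul_I θ :
      ‖Complex.exp (Complex.I * θ)‖ = 1)] at this
  exact h31 this

lemma absAB (t1 t2 t3 : ℝ) (θ : ℝ) :
    (‖Afun t1 t2 θ‖)^2 - (‖Bfun t3 θ‖)^2
      = (t1^2 + t2^2 - 1 - t3^2) - 2*(t1*t2 + t3) * Real.sin θ := by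
  have hexp : Complex.exp (Complex.I * θ)
      = (Real.cos θ : ℂ) + (Real.sin θ : ℂ) * Complex.I := by
    rw [mul_comm, Complex.exp_mul_I, ← Complex.ofReal_cos, ← Complex.ofReal_sin]
  rw [Complex.sq_norm, Complex.sq_norm, Afun, Bfun, hexp]
  simp [Complex.normSq_apply, Complex.cos_ofReal_re, Complex.sin_ofReal_re]
  nlinarith [Real.sin_sq_add_cos_sq θ]

lemma bad_null (t1 t2 t3 : ℝ) (ht1 : 0 < t1) (ht2 : 0 < t2) (ht3 : 0 < t3) :
    volume {θ : ℝ | θ ∈ Set.Icc (-π) π ∧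
      ‖Afun t1 t2 θ‖ = ‖Bfun t3 θ‖} = 0 := by
  set s : ℝ := (t1^2 + t2^2 - 1 - t3^2) / (2*(t1*t2 + t3)) with hs
  have hpos : 0 < 2*(t1*t2 + t3) := by positivity
  have hsub : {θ : ℝ | θ ∈ Set.Icc (-π) π ∧
      ‖Afun t1 t2 θ‖ = ‖Bfun t3 θ‖}
      ⊆ {Real.arcsin s, π - Real.arcsin s, -π - Real.arcsin s} := by
    rintro θ ⟨⟨h1, h2⟩, habs⟩
    have hsin : Real.sin θ = s := by
      have hab := absAB t1 t2 t3 θ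
      rw [habs, sub_self] at hab
      rw [hs]
      field_simp
      linarith
    simp only [Set.mem_insert_iff, Set.mem_singleton_iff]
    rcases le_total θ (-(π/2)) with hc | hc
    · right; right
      have hs2 : Real.sin (-π - θ) = Real.sin θ := by
        rw [show (-π - θ : ℝ) = -(π + θ) by ring, Real.sin_neg, Real.sin_add]
        simp
      have harc : Real.arcsin (Real.sin (-π - θ)) = -π - θ :=
        Real.arcsin_sin (by linarith) (by linarith)
      rw [hs2, hsin] at harc
      linarith
    rcases le_total θ (π/2) with hc2 | hc2
    · left
      have harc : Real.arcsin (Real.sin θ) = θ := Real.arcsin_sin (by linarith) (by linarith)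
      rw [hsin] at harc
      linarith
    · right; left
      have hs2 : Real.sin (π - θ) = Real.sin θ := Real.sin_pi_sub θ
      have harc : Real.arcsin (Real.sin (π - θ)) = π - θ :=
        Real.arcsin_sin (by linarith) (by linarith)
      rw [hs2, hsin] at harc
      linarith
  exact measure_mono_null hsub
    (((Set.finite_singleton _).insert _ |>.insert _).measure_zero _)

lemma main_aux (t1 t2 t3 : ℝ) (ht1 : 0 < t1) (ht2 : 0 < t2) (ht3 : 0 < t3) (h31 : t3 ≠ 1)
    (hint : IntegrableOn (fun k : ℝ × ℝ => (mu t1 t2 t3 k)⁻¹)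
      (Set.Icc (-π) π ×ˢ Set.Icc (-π) π))
    (φ : ℝ → ℂ) (hφm : Measurable φ) (hφ1 : ∀ x, ‖φ x‖ = 1) :
    (∫ k in Set.Icc (-π) π ×ˢ Set.Icc (-π) π,
        φ k.1 * (Complex.exp (Complex.I * (k.2 : ℂ)) / mu t1 t2 t3 k))
      = ∫ θ in Set.Icc (-π) π,
          (if ‖Afun t1 t2 θ‖ < ‖Bfun t3 θ‖
            then φ θ * -(((2 * π : ℝ) : ℂ) / Bfun t3 θ) else 0) := by
  have hfeq : (fun k : ℝ × ℝ => φ k.1 * (Complex.exp (Complex.I * (k.2 : ℂ)) / mu t1 t2 t3 k))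
      = fun k : ℝ × ℝ => (φ k.1 * Complex.exp (Complex.I * (k.2 : ℂ))) * (mu t1 t2 t3 k)⁻¹ := by
    funext k; rw [div_eq_mul_inv, mul_assoc]
  have hgm : AEStronglyMeasurable
      (fun k : ℝ × ℝ => φ k.1 * Complex.exp (Complex.I * (k.2 : ℂ)))
      (volume.restrict (Set.Icc (-π) π ×ˢ Set.Icc (-π) π)) := by
    apply Measurable.aestronglyMeasurable
    exact (hφm.comp measurable_fst).mul
      (Complex.measurable_exp.comp ((Complex.measurable_ofReal.comp measurable_snd).const_mul _))
  have hbdd : ∃ C : ℝ, ∀ k : ℝ × ℝ, ‖φ k.1 * Complex.exp (Complex.I * (k.2 : ℂ))‖ ≤ C := by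
    refine ⟨1, fun k => ?_⟩
    rw [norm_mul, hφ1,
      (by simpa [mul_comm] using Complex.norm_exp_ofReal_mul_I k.2 :
        ‖Complex.exp (Complex.I * (k.2:ℂ))‖ = 1), mul_one]
  have hglobal : IntegrableOn
      (fun k : ℝ × ℝ => φ k.1 * (Complex.exp (Complex.I * (k.2 : ℂ)) / mu t1 t2 t3 k))
      (Set.Icc (-π) π ×ˢ Set.Icc (-π) π) := by
    rw [hfeq]
    exact hint.bdd_mul hgm (Filter.Eventually.of_forall hbdd.choose_spec)
  rw [show (volume : Measure (ℝ × ℝ)) = Measure.prod volume volume from Measure.volume_eq_prod ℝ ℝ]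
    at hglobal ⊢
  rw [setIntegral_prod _ hglobal]
  have hae : ∀ᵐ θ : ℝ, θ ∉ {θ : ℝ | θ ∈ Set.Icc (-π) π ∧
      ‖Afun t1 t2 θ‖ = ‖Bfun t3 θ‖} :=
    measure_eq_zero_iff_ae_notMem.mp (bad_null t1 t2 t3 ht1 ht2 ht3)
  apply setIntegral_congr_ae measurableSet_Icc
  filter_upwards [hae] with θ hθ hIcc
  have hABne : ‖Afun t1 t2 θ‖ ≠ ‖Bfun t3 θ‖ :=
    fun h => hθ ⟨hIcc, h⟩
  rw [integral_const_mul]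
  have hinner : (∫ y in Set.Icc (-π) π,
        Complex.exp (Complex.I * (y : ℂ)) / mu t1 t2 t3 (θ, y))
      = ∫ y in (-π : ℝ)..π, Complex.exp (Complex.I * (y : ℂ))
          / (Afun t1 t2 θ - Bfun t3 θ * Complex.exp (Complex.I * (y : ℂ))) := by
    simp only [mu_split]
    rw [integral_Icc_eq_integral_Ioc,
      ← intervalIntegral.integral_of_le (by linarith [Real.pi_pos] : (-π : ℝ) ≤ π)]
  rw [hinner, AB_int _ _ (Bfun_ne t3 ht3 h31 θ) hABne]
  split_ifs with h
  · rfl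
  · rw [mul_zero]

/-- Residue-theorem identities:
`(2π)⁻² ∫ e^{i k₂}/μ dk = −(2π)⁻¹ ∫ 1{|A|<|B|}/B dθ` and
`(2π)⁻² ∫ e^{i(k₁+k₂)}/μ dk = −(2π)⁻¹ ∫ e^{iθ} 1{|A|<|B|}/B dθ`. -/
theorem residue_identities_B (t1 t2 t3 : ℝ) (ht1 : 0 < t1) (ht2 : 0 < t2) (ht3 : 0 < t3)
    (h31 : t3 ≠ 1)
    (hint : IntegrableOn (fun k : ℝ × ℝ => (mu t1 t2 t3 k)⁻¹)
      (Set.Icc (-π) π ×ˢ Set.Icc (-π) π)) :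
    (((2 * π) ^ 2 : ℝ) : ℂ)⁻¹ *
        (∫ k in Set.Icc (-π) π ×ˢ Set.Icc (-π) π,
          Complex.exp (Complex.I * (k.2 : ℂ)) / mu t1 t2 t3 k)
      = -(((2 * π : ℝ) : ℂ)⁻¹ *
        ∫ θ in (-π)..π,
          (if ‖Afun t1 t2 θ‖ < ‖Bfun t3 θ‖
            then (Bfun t3 θ)⁻¹ else 0)) ∧
    (((2 * π) ^ 2 : ℝ) : ℂ)⁻¹ *
        (∫ k in Set.Icc (-π) π ×ˢ Set.Icc (-π) π,
          Complex.exp (Complex.I * ((k.1 : ℂ) + (k.2 : ℂ))) / mu t1 t2 t3 k)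
      = -(((2 * π : ℝ) : ℂ)⁻¹ *
        ∫ θ in (-π)..π,
          (if ‖Afun t1 t2 θ‖ < ‖Bfun t3 θ‖
            then Complex.exp (Complex.I * (θ : ℂ)) * (Bfun t3 θ)⁻¹ else 0)) := by
  have hπ : (π : ℂ) ≠ 0 := by exact_mod_cast Real.pi_ne_zero
  have hle : (-π : ℝ) ≤ π := by linarith [Real.pi_pos]
  constructor
  · have h1 := main_aux t1 t2 t3 ht1 ht2 ht3 h31 hint (fun _ => 1) measurable_const (by simp)
    simp only [one_mul] at h1
    rw [h1, intervalIntegral.integral_of_le hle, ← integral_Icc_eq_integral_Ioc]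
    have hif : ∀ θ : ℝ, (if ‖Afun t1 t2 θ‖ < ‖Bfun t3 θ‖
        then -(((2 * π : ℝ) : ℂ) / Bfun t3 θ) else 0)
        = (-((2 * π : ℝ) : ℂ)) * (if ‖Afun t1 t2 θ‖ < ‖Bfun t3 θ‖
            then (Bfun t3 θ)⁻¹ else 0) := by
      intro θ; split_ifs
      · rw [div_eq_mul_inv]; ring
      · rw [mul_zero]
    simp only [hif]
    rw [integral_const_mul, ← mul_assoc]

    push_cast
    field_simp
  · have h1 := main_aux t1 t2 t3 ht1 ht2 ht3 h31 hint
      (fun θ => Complex.exp (Complex.I * (θ : ℂ)))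
      (Complex.measurable_exp.comp (Complex.measurable_ofReal.const_mul _))
      (fun x => by simpa [mul_comm] using Complex.norm_exp_ofReal_mul_I x)
    have hsplit : ∀ k : ℝ × ℝ,
        Complex.exp (Complex.I * ((k.1 : ℂ) + (k.2 : ℂ))) / mu t1 t2 t3 k
        = Complex.exp (Complex.I * (k.1 : ℂ)) *
            (Complex.exp (Complex.I * (k.2 : ℂ)) / mu t1 t2 t3 k) := by
      intro k
      rw [mul_add, Complex.exp_add, mul_div_assoc]
    simp only [hsplit]
    rw [h1, intervalIntegral.integral_of_le hle, ← integral_Icc_eq_integral_Ioc]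
    have hif : ∀ θ : ℝ, (if ‖Afun t1 t2 θ‖ < ‖Bfun t3 θ‖
        then Complex.exp (Complex.I * (θ : ℂ)) * -(((2 * π : ℝ) : ℂ) / Bfun t3 θ) else 0)
        = (-((2 * π : ℝ) : ℂ)) * (if ‖Afun t1 t2 θ‖ < ‖Bfun t3 θ‖
            then Complex.exp (Complex.I * (θ : ℂ)) * (Bfun t3 θ)⁻¹ else 0) := by
      intro θ; split_ifs
      · rw [div_eq_mul_inv]; ring
      · rw [mul_zero]
    simp only [hif]
    rw [integral_const_mul, ← mul_assoc]

    push_cast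
    field_simp
end
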